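/- For α ∈ ℕ, β > −1, and n ≥ 1, the classical Jacobi operator L₂^{α,β} y = (x²−1)y'' + [α−β+(α+β+2)x]y' satisfies {L₂^{α,β} − n(n+α+β+1)} R_n^{α,β}(x) = (2(α+1)/(x−1))·R_n^{α,β}(x) = ((α+1)_n (α+β+2)_n / (n! (β+1)_{n−1}))·P_{n−1}^{α+2,β}(x) for x ≠ 1. -/

import Mathlib

/-- Pochhammer symbol (rising factorial) for a real argument. -/
noncomputable def poch (a : ℝ) (k : ℕ) : ℝ := ∏ i ∈ Finset.range k, (a + i)

/-- Jacobi polynomial of degree `n` with real parameters `γ, δ`, via its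
terminating hypergeometric series. -/
noncomputable def jacobiP (n : ℕ) (γ δ : ℝ) (x : ℝ) : ℝ :=
  (poch (γ + 1) n / Nat.factorial n) *
    ∑ k ∈ Finset.range (n + 1),
      (poch (-(n : ℝ)) k * poch ((n : ℝ) + γ + δ + 1) k /
        (poch (γ + 1) k * Nat.factorial k)) * ((1 - x) / 2) ^ k

open Polynomial Finset

lemma poch_succ (a : ℝ) (k : ℕ) : poch a (k+1) = poch a k * (a + k) :=
  Finset.prod_range_succ _ _

lemma poch_succ' (a : ℝ) (k : ℕ) : poch a (k+1) = a * poch (a+1) k := by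
  rw [poch, Finset.prod_range_succ']
  rw [mul_comm]
  simp only [Nat.cast_zero, add_zero]
  congr 1
  apply Finset.prod_congr rfl
  intro i _
  push_cast
  ring

lemma poch_pos {a : ℝ} (ha : 0 < a) (k : ℕ) : 0 < poch a k := by
  apply Finset.prod_pos
  intro i _
  positivity

/-- coefficients of the scaled hypergeometric series (in powers of `1 - x`). -/
noncomputable def hd (aa bb cc : ℝ) (k : ℕ) : ℝ :=
  poch aa k * poch bb k / (poch cc k * Nat.factorial k * 2 ^ k)

lemma hd_rec (aa bb cc : ℝ) (hcc : 0 < cc) (k : ℕ) :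
    2 * ((k:ℝ)+1) * ((k:ℝ)+cc) * hd aa bb cc (k+1)
      = ((k:ℝ)+aa) * ((k:ℝ)+bb) * hd aa bb cc k := by
  have h1 : poch cc k ≠ 0 := (poch_pos hcc k).ne'
  have h2 : (cc + (k:ℝ)) ≠ 0 := by positivity
  have h3 : ((Nat.factorial k : ℝ)) ≠ 0 := by
    exact_mod_cast (Nat.factorial_pos k).ne'
  simp only [hd, poch_succ, Nat.factorial_succ, pow_succ]
  push_cast
  field_simp
  ring

/-- the scaled hypergeometric polynomial, in the variable `u = 1 - x`. -/
noncomputable def hypPoly (aa bb cc : ℝ) (m : ℕ) : ℝ[X] :=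
  ∑ k ∈ Finset.range (m+1), C (hd aa bb cc k) * X ^ k

lemma term_eq (aa bb cc r : ℝ) (k : ℕ) :
    (2 * X - X^2) * derivative (derivative (C r * X^k))
      + (C (2*cc) - C (aa+bb+1) * X) * derivative (C r * X^k)
      - C (aa*bb) * (C r * X^k)
    = C (2 * (k:ℝ) * ((k:ℝ) - 1 + cc) * r) * X^(k-1)
      - C (((k:ℝ)+aa) * ((k:ℝ)+bb) * r) * X^k := by
  match k with
  | 0 =>
    simp only [pow_zero, mul_one, derivative_C, mul_zero, zero_sub, Nat.cast_zero, zero_mul,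
      map_zero, Nat.zero_sub, zero_add]
    simp only [map_mul, map_add]
    try ring
  | 1 =>
    simp only [pow_one, derivative_C_mul, derivative_X, mul_one, derivative_C, mul_zero,
      Nat.cast_one]
    simp only [map_mul, map_add, map_sub, map_one]
    try ring
  | (k+2) =>
    simp only [derivative_C_mul, derivative_X_pow, Nat.add_sub_cancel]
    push_cast
    simp only [map_mul, map_add, map_sub, map_one, map_ofNat]
    try ring

lemma hyp_ode (aa bb cc : ℝ) (m : ℕ)
    (hrec : ∀ j : ℕ, 2 * ((j:ℝ)+1) * ((j:ℝ)+cc) * hd aa bb cc (j+1)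
      = ((j:ℝ)+aa) * ((j:ℝ)+bb) * hd aa bb cc j)
    (hm : (m:ℝ) + aa = 0) :
    (2 * X - X^2) * derivative (derivative (hypPoly aa bb cc m))
      + (C (2*cc) - C (aa+bb+1) * X) * derivative (hypPoly aa bb cc m)
      - C (aa*bb) * hypPoly aa bb cc m = 0 := by
  unfold hypPoly
  rw [derivative_sum, derivative_sum, Finset.mul_sum, Finset.mul_sum, Finset.mul_sum,
    ← Finset.sum_add_distrib, ← Finset.sum_sub_distrib]
  rw [Finset.sum_congr rfl (fun k _ => term_eq aa bb cc (hd aa bb cc k) k)]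
  rw [Finset.sum_sub_distrib]
  rw [Finset.sum_range_succ' (fun k => C (2 * (k:ℝ) * ((k:ℝ) - 1 + cc) * hd aa bb cc k) * X^(k-1)),
    Finset.sum_range_succ]
  have h0 : C (2 * ((0:ℕ):ℝ) * (((0:ℕ):ℝ) - 1 + cc) * hd aa bb cc 0) * X^(0-1) = 0 := by
    norm_num
  have hms : C (((m:ℝ)+aa) * ((m:ℝ)+bb) * hd aa bb cc m) * X^m = 0 := by
    rw [hm]; norm_num
  rw [h0, hms, add_zero, add_zero]
  rw [sub_eq_zero]
  apply Finset.sum_congr rfl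
  intro i _
  have h := hrec i
  push_cast
  congr 1
  rw [← h]
  ring

/-- the Jacobi polynomial as a `Polynomial ℝ`. -/
noncomputable def jpoly (m : ℕ) (γ δ : ℝ) : ℝ[X] :=
  C (poch (γ+1) m / Nat.factorial m) *
    (hypPoly (-(m:ℝ)) ((m:ℝ)+γ+δ+1) (γ+1) m).comp (1 - X)

lemma jpoly_eval (m : ℕ) (γ δ x : ℝ) : (jpoly m γ δ).eval x = jacobiP m γ δ x := by
  simp only [jpoly, jacobiP, hypPoly, eval_mul, eval_C, eval_comp, eval_finset_sum,
    eval_sub, eval_one, eval_X, eval_pow]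
  congr 1
  apply Finset.sum_congr rfl
  intro k _
  rw [hd, div_pow]
  rw [div_mul_eq_div_div]
  ring

lemma jpoly_ode (m : ℕ) (γ δ : ℝ) (hγ : 0 < γ + 1) :
    (X^2 - 1) * derivative (derivative (jpoly m γ δ))
      + (C (γ - δ) + C (γ + δ + 2) * X) * derivative (jpoly m γ δ)
    = C ((m:ℝ) * ((m:ℝ) + γ + δ + 1)) * jpoly m γ δ := by
  set K : ℝ := poch (γ+1) m / Nat.factorial m with hK
  set F : ℝ[X] := hypPoly (-(m:ℝ)) ((m:ℝ)+γ+δ+1) (γ+1) m with hF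
  have h1 : derivative (jpoly m γ δ) = C K * -((derivative F).comp (1 - X)) := by
    rw [jpoly, derivative_C_mul, derivative_comp_one_sub_X, ← hK, ← hF]
  have h2 : derivative (derivative (jpoly m γ δ))
      = C K * ((derivative (derivative F)).comp (1 - X)) := by
    rw [h1, derivative_C_mul, derivative_neg, derivative_comp_one_sub_X]
    ring
  have hyp := hyp_ode (-(m:ℝ)) ((m:ℝ)+γ+δ+1) (γ+1) m
    (fun j => hd_rec _ _ _ hγ j) (by ring)
  have hypc := congrArg (fun p => p.comp (1 - X)) hyp
  simp only [add_comp, sub_comp, mul_comp, C_comp, X_comp, pow_comp, zero_comp, one_comp,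
    ofNat_comp] at hypc
  rw [h2, h1, jpoly, ← hK, ← hF]
  simp only [map_mul, map_add, map_sub, map_neg, map_one, map_ofNat] at hypc ⊢
  push_cast at hypc
  linear_combination (-(C K)) * hypc

theorem stmt10 (α : ℕ) (β : ℝ) (hβ : -1 < β) (n : ℕ) (hn : 1 ≤ n)
    (x : ℝ) (hx : x ≠ 1) :
    let A : ℝ := poch ((α : ℝ) + 2) (n - 1) * poch ((α : ℝ) + β + 2) n /
      (2 * Nat.factorial n * poch (β + 1) (n - 1))
    let R : ℝ → ℝ := fun t => A * (t - 1) * jacobiP (n - 1) ((α : ℝ) + 2) β t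
    ((x ^ 2 - 1) * deriv (deriv R) x
        + ((α : ℝ) - β + ((α : ℝ) + β + 2) * x) * deriv R x
        - (n : ℝ) * ((n : ℝ) + α + β + 1) * R x
      = (2 * ((α : ℝ) + 1) / (x - 1)) * R x) ∧
    (2 * ((α : ℝ) + 1) / (x - 1)) * R x
      = (poch ((α : ℝ) + 1) n * poch ((α : ℝ) + β + 2) n /
          (Nat.factorial n * poch (β + 1) (n - 1))) *
          jacobiP (n - 1) ((α : ℝ) + 2) β x := by
  obtain ⟨p, rfl⟩ : ∃ p, n = p + 1 := ⟨n - 1, (Nat.succ_pred_eq_of_pos hn).symm⟩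
  intro A R
  have hx1 : x - 1 ≠ 0 := sub_ne_zero.mpr hx
  set J : ℝ[X] := jpoly p ((α:ℝ)+2) β with hJ
  set q : ℝ[X] := C A * (X - 1) * J with hq
  -- R as a polynomial evaluation
  have hRe : R = fun t => q.eval t := by
    funext t
    show A * (t - 1) * jacobiP (p + 1 - 1) ((α : ℝ) + 2) β t = q.eval t
    rw [Nat.add_sub_cancel, ← jpoly_eval, hq]
    simp [mul_assoc]
    exact Or.inl (Or.inl rfl)
  have hRx : R x = A * (x - 1) * J.eval x := by
    rw [hRe, hq]; simp
  have hd1 : deriv R = fun t => (derivative q).eval t := by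
    funext t; rw [hRe]; exact Polynomial.deriv (p := q)
  have hd1x : deriv R x = (derivative q).eval x := by rw [hd1]
  have hd2 : deriv (deriv R) x = (derivative (derivative q)).eval x := by
    rw [hd1]; exact Polynomial.deriv (p := derivative q)
  have hq1 : derivative q = C A * ((X - 1) * derivative J + J) := by
    rw [hq]
    simp only [derivative_mul, derivative_C, derivative_sub, derivative_X, derivative_one]
    ring
  have hq2 : derivative (derivative q)
      = C A * ((X - 1) * derivative (derivative J) + 2 * derivative J) := by
    rw [hq1]
    simp only [derivative_mul, derivative_add, derivative_C, derivative_sub, derivative_X,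
      derivative_one]
    ring
  -- evaluated ODE
  have hγ : (0:ℝ) < (α:ℝ) + 2 + 1 := by positivity
  have hodev := congrArg (eval x) (jpoly_ode p ((α:ℝ)+2) β hγ)
  rw [← hJ] at hodev
  simp only [eval_add, eval_mul, eval_sub, eval_pow, eval_X, eval_one, eval_C] at hodev
  -- values of the derivatives
  have e1 : deriv R x = A * ((x - 1) * (derivative J).eval x + J.eval x) := by
    rw [hd1x, hq1]; simp
  have e2 : deriv (deriv R) x
      = A * ((x - 1) * (derivative (derivative J)).eval x + 2 * (derivative J).eval x) := by
    rw [hd2, hq2]; simp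
  have hrhs : 2 * ((α:ℝ) + 1) / (x - 1) * (A * (x - 1) * J.eval x)
      = 2 * ((α:ℝ) + 1) * A * J.eval x := by
    field_simp
  have hJx : jacobiP (p + 1 - 1) ((α : ℝ) + 2) β x = J.eval x := by
    rw [Nat.add_sub_cancel, hJ, jpoly_eval]
  constructor
  · rw [e1, e2, hRx, hrhs]
    push_cast at hodev ⊢
    linear_combination (A * (x - 1)) * hodev
  · rw [hRx, hrhs, hJx]
    have hA : A = poch ((α:ℝ) + 2) p * poch ((α:ℝ) + β + 2) (p + 1) /
        (2 * Nat.factorial (p + 1) * poch (β + 1) p) := rfl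
    have hpoch : poch ((α:ℝ) + 1) (p + 1) = ((α:ℝ) + 1) * poch ((α:ℝ) + 2) p := by
      rw [poch_succ']
      congr 2
      ring
    have hb : (0:ℝ) < β + 1 := by linarith
    have hD : poch (β + 1) p ≠ 0 := (poch_pos hb p).ne'
    have hfac : ((Nat.factorial (p+1) : ℝ)) ≠ 0 := by
      exact_mod_cast (Nat.factorial_pos (p+1)).ne'
    rw [hA, Nat.add_sub_cancel, hpoch]
    field_simp
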